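/- If μ, ν > 0, μ + ν < 1, and a, b are real numbers with b > a + 2, then there exists a constant C (depending only on μ, ν) such that ∑_{k} 1/((k-a)^{1-μ} (b-k)^{1-ν}) ≤ C / (b-a)^{1-μ-ν}, where the sum ranges over integers k with k - a ≥ 1 and b - k ≥ 1. -/

import Mathlib

open Real

lemma key_step {m mu : ℝ} (hm : 0 ≤ m) (hmu : 0 < mu) (hmu1 : mu ≤ 1) :
    mu * (m + 1) ^ (mu - 1) ≤ (m + 1) ^ mu - m ^ mu := by
  have hm1 : (0:ℝ) < m + 1 := by linarith
  have hs : (-1:ℝ) ≤ -(1/(m+1)) := by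
    rw [neg_le_neg_iff]
    rw [div_le_one hm1]; linarith
  have hb := rpow_one_add_le_one_add_mul_self hs hmu.le hmu1
  have h1 : 1 + -(1/(m+1)) = m/(m+1) := by field_simp; ring
  rw [h1] at hb
  rw [Real.div_rpow hm hm1.le] at hb
  -- hb : m ^ mu / (m+1) ^ mu ≤ 1 + mu * -(1/(m+1))
  have hpos : (0:ℝ) < (m+1) ^ mu := Real.rpow_pos_of_pos hm1 _
  have h2 : (m + 1) ^ (mu - 1) = (m+1) ^ mu / (m+1) := by
    rw [Real.rpow_sub hm1, Real.rpow_one]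
  rw [h2]
  have := (div_le_iff₀ hpos).mp hb
  have h3 : (1 + mu * -(1/(m+1))) * (m+1) ^ mu
      = (m+1) ^ mu - mu * ((m+1) ^ mu / (m+1)) := by
    field_simp; ring
  rw [h3] at this
  linarith

lemma sum_rpow_le (mu : ℝ) (hmu : 0 < mu) (hmu1 : mu ≤ 1) (n : ℕ) :
    ∑ j ∈ Finset.range n, ((j:ℝ)+1)^(mu-1) ≤ (n:ℝ)^mu / mu := by
  induction n with
  | zero => simp [Real.zero_rpow hmu.ne']
  | succ n ih =>
    rw [Finset.sum_range_succ]
    have hk := key_step (m := (n:ℝ)) (Nat.cast_nonneg n) hmu hmu1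
    have hstep : ((n:ℝ)+1)^(mu-1) ≤ (((n:ℝ)+1)^mu - (n:ℝ)^mu)/mu := by
      rw [le_div_iff₀ hmu]; nlinarith [hk]
    calc ∑ j ∈ Finset.range n, ((j:ℝ)+1)^(mu-1) + ((n:ℝ)+1)^(mu-1)
        ≤ (n:ℝ)^mu / mu + (((n:ℝ)+1)^mu - (n:ℝ)^mu)/mu := add_le_add ih hstep
      _ = ((n:ℝ)+1)^mu / mu := by ring
      _ = ((n+1:ℕ):ℝ)^mu / mu := by push_cast; ring_nf

theorem discrete_beta_sum_bound (mu nu : ℝ) (hmu : 0 < mu) (hnu : 0 < nu)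
    (hsum : mu + nu < 1) :
    ∃ C : ℝ, 0 < C ∧ ∀ a b : ℝ, b > a + 2 →
      (∑' k : ℤ, if 1 ≤ (k : ℝ) - a ∧ 1 ≤ b - k then
          ((k : ℝ) - a) ^ (mu - 1) * (b - k) ^ (nu - 1) else 0)
        ≤ C / (b - a) ^ (1 - mu - nu) := by
  have hmu1 : mu ≤ 1 := by linarith
  have hnu1 : nu ≤ 1 := by linarith
  refine ⟨2/mu + 2/nu, by positivity, fun a b hab => ?_⟩
  set L : ℝ := b - a with hLdef
  have hL2 : 2 < L := by simp only [hLdef]; linarith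
  have hL0 : 0 < L := by linarith
  set K0 : ℤ := ⌈a + 1⌉ with hK0def
  set K1 : ℤ := ⌊b - 1⌋ with hK1def
  have hK0a : a + 1 ≤ (K0:ℝ) := Int.le_ceil _
  have hK0a' : (K0:ℝ) < a + 2 := by
    rw [hK0def]; linarith [Int.ceil_lt_add_one (a+1)]
  have hK1b : (K1:ℝ) ≤ b - 1 := Int.floor_le _
  have hK1b' : b - 2 < (K1:ℝ) := by
    rw [hK1def]; linarith [Int.sub_one_lt_floor (b-1)]
  set n : ℕ := (K1 + 1 - K0).toNat with hndef
  have hnL : (n:ℝ) ≤ L := by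
    rcases le_or_gt (K1 + 1 - K0) 0 with h | h
    · have : n = 0 := by simp [hndef, Int.toNat_of_nonpos h]
      rw [this]; push_cast; linarith
    · have : (n:ℤ) = K1 + 1 - K0 := Int.toNat_of_nonneg h.le
      have : (n:ℝ) = (K1:ℝ) + 1 - K0 := by exact_mod_cast congrArg (Int.cast : ℤ → ℝ) this
      rw [this]; linarith
  -- rewrite tsum as a finite sum
  have hsum_eq : (∑' k : ℤ, if 1 ≤ (k : ℝ) - a ∧ 1 ≤ b - k then
          ((k : ℝ) - a) ^ (mu - 1) * (b - k) ^ (nu - 1) else 0)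
      = ∑ k ∈ Finset.Icc K0 K1, ((k : ℝ) - a) ^ (mu - 1) * (b - k) ^ (nu - 1) := by
    rw [tsum_eq_sum (s := Finset.Icc K0 K1) ?_]
    · refine Finset.sum_congr rfl fun k hk => ?_
      simp only [Finset.mem_Icc] at hk
      have h1 : (K0:ℝ) ≤ k := by exact_mod_cast hk.1
      have h2 : (k:ℝ) ≤ K1 := by exact_mod_cast hk.2
      rw [if_pos ⟨by linarith, by linarith⟩]
    · intro k hk
      simp only [Finset.mem_Icc, not_and_or, not_le] at hk
      rw [if_neg]
      rintro ⟨h1, h2⟩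
      rcases hk with h | h
      · exact absurd (Int.ceil_le.mpr (by linarith : a + 1 ≤ (k:ℝ))) (by omega)
      · exact absurd (Int.le_floor.mpr (by linarith : (k:ℝ) ≤ b - 1)) (by omega)
  rw [hsum_eq]
  -- termwise split
  have hsplit : ∑ k ∈ Finset.Icc K0 K1, ((k : ℝ) - a) ^ (mu - 1) * (b - k) ^ (nu - 1)
      ≤ (L/2)^(nu-1) * ∑ k ∈ Finset.Icc K0 K1, ((k : ℝ) - a) ^ (mu - 1)
        + (L/2)^(mu-1) * ∑ k ∈ Finset.Icc K0 K1, (b - (k:ℝ)) ^ (nu - 1) := by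
    rw [Finset.mul_sum, Finset.mul_sum, ← Finset.sum_add_distrib]
    refine Finset.sum_le_sum fun k hk => ?_
    simp only [Finset.mem_Icc] at hk
    have h1 : (K0:ℝ) ≤ k := by exact_mod_cast hk.1
    have h2 : (k:ℝ) ≤ K1 := by exact_mod_cast hk.2
    have hx : (1:ℝ) ≤ (k:ℝ) - a := by linarith
    have hy : (1:ℝ) ≤ b - k := by linarith
    have hx0 : (0:ℝ) < (k:ℝ) - a := by linarith
    have hy0 : (0:ℝ) < b - k := by linarith
    have hL20 : (0:ℝ) < L/2 := by linarith
    have hxp : (0:ℝ) ≤ ((k:ℝ) - a) ^ (mu - 1) := (Real.rpow_pos_of_pos hx0 _).le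
    have hyp : (0:ℝ) ≤ (b - (k:ℝ)) ^ (nu - 1) := (Real.rpow_pos_of_pos hy0 _).le
    rcases le_or_gt (L/2) (b - k) with h | h
    · have hle : (b - (k:ℝ)) ^ (nu - 1) ≤ (L/2)^(nu-1) :=
        Real.rpow_le_rpow_of_nonpos hL20 h (by linarith)
      have : ((k : ℝ) - a) ^ (mu - 1) * (b - k) ^ (nu - 1)
          ≤ (L/2)^(nu-1) * (((k:ℝ) - a) ^ (mu - 1)) := by
        rw [mul_comm ((L/2)^(nu-1))]
        exact mul_le_mul_of_nonneg_left hle hxp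
      have hnn : 0 ≤ (L/2)^(mu-1) * (b - (k:ℝ)) ^ (nu - 1) :=
        mul_nonneg (Real.rpow_pos_of_pos hL20 _).le hyp
      linarith
    · have hxL : L/2 ≤ (k:ℝ) - a := by
        have : (k:ℝ) - a + (b - k) = L := by simp [hLdef]
        linarith
      have hle : ((k:ℝ) - a) ^ (mu - 1) ≤ (L/2)^(mu-1) :=
        Real.rpow_le_rpow_of_nonpos hL20 hxL (by linarith)
      have : ((k : ℝ) - a) ^ (mu - 1) * (b - k) ^ (nu - 1)
          ≤ (L/2)^(mu-1) * ((b - (k:ℝ)) ^ (nu - 1)) :=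
        mul_le_mul_of_nonneg_right hle hyp
      have hnn : 0 ≤ (L/2)^(nu-1) * (((k:ℝ) - a) ^ (mu - 1)) :=
        mul_nonneg (Real.rpow_pos_of_pos hL20 _).le hxp
      linarith
  -- bound A
  have hA : ∑ k ∈ Finset.Icc K0 K1, ((k : ℝ) - a) ^ (mu - 1)
      ≤ (n:ℝ)^mu / mu := by
    have heq : ∑ k ∈ Finset.Icc K0 K1, ((k : ℝ) - a) ^ (mu - 1)
        = ∑ j ∈ Finset.range n, (((K0 + (j:ℤ)):ℝ) - a) ^ (mu - 1) := by
      refine Finset.sum_nbij' (fun k => (k - K0).toNat) (fun j => K0 + (j:ℤ))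
        ?_ ?_ ?_ ?_ ?_
      · intro k hk
        simp only [Finset.mem_Icc] at hk
        simp only [Finset.mem_range, hndef]
        omega
      · intro j hj
        simp only [Finset.mem_range, hndef] at hj
        simp only [Finset.mem_Icc]
        omega
      · intro k hk; simp only [Finset.mem_Icc] at hk
        show K0 + (((k - K0).toNat : ℤ)) = k
        omega
      · intro j hj; simp only [Finset.mem_range, hndef] at hj
        show ((K0 + (j:ℤ)) - K0).toNat = j
        omega
      · intro k hk
        simp only [Finset.mem_Icc] at hk
        have hkk : K0 + (((k - K0).toNat : ℤ)) = k := by omega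
        have hkr : ((K0:ℝ) + ((((k - K0).toNat : ℤ)) : ℝ)) = (k:ℝ) := by
          exact_mod_cast hkk
        push_cast
        rw [← hkr]
        push_cast
        ring_nf
    rw [heq]
    refine le_trans (Finset.sum_le_sum fun j hj => ?_) (sum_rpow_le mu hmu hmu1 n)
    have hbase : ((j:ℝ) + 1) ≤ ((K0 + (j:ℤ)):ℝ) - a := by push_cast; linarith
    exact Real.rpow_le_rpow_of_nonpos (by positivity) hbase (by linarith)
  -- bound B
  have hB : ∑ k ∈ Finset.Icc K0 K1, (b - (k:ℝ)) ^ (nu - 1)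
      ≤ (n:ℝ)^nu / nu := by
    have heq : ∑ k ∈ Finset.Icc K0 K1, (b - (k:ℝ)) ^ (nu - 1)
        = ∑ j ∈ Finset.range n, (b - ((K1 - (j:ℤ)):ℝ)) ^ (nu - 1) := by
      refine Finset.sum_nbij' (fun k => (K1 - k).toNat) (fun j => K1 - (j:ℤ))
        ?_ ?_ ?_ ?_ ?_
      · intro k hk
        simp only [Finset.mem_Icc] at hk
        simp only [Finset.mem_range, hndef]
        omega
      · intro j hj
        simp only [Finset.mem_range, hndef] at hj
        simp only [Finset.mem_Icc]
        omega
      · intro k hk; simp only [Finset.mem_Icc] at hk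
        show K1 - (((K1 - k).toNat : ℤ)) = k
        omega
      · intro j hj; simp only [Finset.mem_range, hndef] at hj
        show (K1 - (K1 - (j:ℤ))).toNat = j
        omega
      · intro k hk
        simp only [Finset.mem_Icc] at hk
        have hkk : K1 - (((K1 - k).toNat : ℤ)) = k := by omega
        have hkr : ((K1:ℝ) - ((((K1 - k).toNat : ℤ)) : ℝ)) = (k:ℝ) := by
          exact_mod_cast hkk
        push_cast
        rw [← hkr]
        push_cast
        ring_nf
    rw [heq]
    refine le_trans (Finset.sum_le_sum fun j hj => ?_) (sum_rpow_le nu hnu hnu1 n)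
    have hbase : ((j:ℝ) + 1) ≤ b - ((K1 - (j:ℤ)):ℝ) := by push_cast; linarith
    exact Real.rpow_le_rpow_of_nonpos (by positivity) hbase (by linarith)
  -- put everything together
  have hL20 : (0:ℝ) < L/2 := by linarith
  have hnmu : (n:ℝ)^mu ≤ L^mu := Real.rpow_le_rpow (Nat.cast_nonneg n) hnL hmu.le
  have hnnu : (n:ℝ)^nu ≤ L^nu := Real.rpow_le_rpow (Nat.cast_nonneg n) hnL hnu.le
  have h2exp : (2:ℝ)^(1-nu) ≤ 2 := by
    calc (2:ℝ)^(1-nu) ≤ 2^(1:ℝ) :=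
          Real.rpow_le_rpow_of_exponent_le (by norm_num) (by linarith)
      _ = 2 := Real.rpow_one 2
  have h2exp' : (2:ℝ)^(1-mu) ≤ 2 := by
    calc (2:ℝ)^(1-mu) ≤ 2^(1:ℝ) :=
          Real.rpow_le_rpow_of_exponent_le (by norm_num) (by linarith)
      _ = 2 := Real.rpow_one 2
  have hhalf_nu : (L/2)^(nu-1) ≤ 2 * L^(nu-1) := by
    have heq : (L/2)^(nu-1) = L^(nu-1) * 2^(1-nu) := by
      rw [Real.div_rpow hL0.le (by norm_num : (0:ℝ) ≤ 2), div_eq_mul_inv,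
        ← Real.rpow_neg (by norm_num : (0:ℝ) ≤ 2)]
      congr 1
      ring
    rw [heq, mul_comm (2:ℝ)]
    exact mul_le_mul_of_nonneg_left h2exp (Real.rpow_pos_of_pos hL0 _).le
  have hhalf_mu : (L/2)^(mu-1) ≤ 2 * L^(mu-1) := by
    have heq : (L/2)^(mu-1) = L^(mu-1) * 2^(1-mu) := by
      rw [Real.div_rpow hL0.le (by norm_num : (0:ℝ) ≤ 2), div_eq_mul_inv,
        ← Real.rpow_neg (by norm_num : (0:ℝ) ≤ 2)]
      congr 1
      ring
    rw [heq, mul_comm (2:ℝ)]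
    exact mul_le_mul_of_nonneg_left h2exp' (Real.rpow_pos_of_pos hL0 _).le
  have hA0 : 0 ≤ ∑ k ∈ Finset.Icc K0 K1, ((k : ℝ) - a) ^ (mu - 1) :=
    Finset.sum_nonneg fun k hk => Real.rpow_nonneg (by
      simp only [Finset.mem_Icc] at hk
      have h1 : (K0:ℝ) ≤ k := by exact_mod_cast hk.1
      linarith) _
  have hB0 : 0 ≤ ∑ k ∈ Finset.Icc K0 K1, (b - (k:ℝ)) ^ (nu - 1) :=
    Finset.sum_nonneg fun k hk => Real.rpow_nonneg (by
      simp only [Finset.mem_Icc] at hk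
      have h2 : (k:ℝ) ≤ K1 := by exact_mod_cast hk.2
      linarith) _
  have hterm1 : (L/2)^(nu-1) * ∑ k ∈ Finset.Icc K0 K1, ((k : ℝ) - a) ^ (mu - 1)
      ≤ 2 * L^(nu-1) * (L^mu / mu) := by
    refine mul_le_mul hhalf_nu (hA.trans ?_) hA0 (by positivity)
    exact (div_le_div_iff_of_pos_right hmu).mpr hnmu
  have hterm2 : (L/2)^(mu-1) * ∑ k ∈ Finset.Icc K0 K1, (b - (k:ℝ)) ^ (nu - 1)
      ≤ 2 * L^(mu-1) * (L^nu / nu) := by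
    refine mul_le_mul hhalf_mu (hB.trans ?_) hB0 (by positivity)
    exact (div_le_div_iff_of_pos_right hnu).mpr hnnu
  have hfin : 2 * L^(nu-1) * (L^mu / mu) + 2 * L^(mu-1) * (L^nu / nu)
      = (2/mu + 2/nu) * L^(mu+nu-1) := by
    have e1 : L^(nu-1) * L^mu = L^(mu+nu-1) := by
      rw [← Real.rpow_add hL0]; congr 1; ring
    have e2 : L^(mu-1) * L^nu = L^(mu+nu-1) := by
      rw [← Real.rpow_add hL0]; congr 1; ring
    calc 2 * L^(nu-1) * (L^mu / mu) + 2 * L^(mu-1) * (L^nu / nu)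
        = 2/mu * (L^(nu-1)*L^mu) + 2/nu * (L^(mu-1)*L^nu) := by ring
      _ = (2/mu + 2/nu) * L^(mu+nu-1) := by rw [e1, e2]; ring
  have hrhs : (2/mu + 2/nu) / L ^ (1 - mu - nu) = (2/mu + 2/nu) * L^(mu+nu-1) := by
    rw [div_eq_mul_inv, ← Real.rpow_neg hL0.le]
    congr 1
    ring
  rw [hrhs]
  calc ∑ k ∈ Finset.Icc K0 K1, ((k : ℝ) - a) ^ (mu - 1) * (b - k) ^ (nu - 1)
      ≤ (L/2)^(nu-1) * ∑ k ∈ Finset.Icc K0 K1, ((k : ℝ) - a) ^ (mu - 1)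
        + (L/2)^(mu-1) * ∑ k ∈ Finset.Icc K0 K1, (b - (k:ℝ)) ^ (nu - 1) := hsplit
    _ ≤ 2 * L^(nu-1) * (L^mu / mu) + 2 * L^(mu-1) * (L^nu / nu) := add_le_add hterm1 hterm2
    _ = (2/mu + 2/nu) * L^(mu+nu-1) := hfin
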